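/- Let X and Y be finite nonempty sets, c ≥ 0, ε ≥ 0, δ ∈ [0,1], and D a nonnegative function on pairs of probability distributions over X. Let T be a map from distributions over X to distributions over X that is (c,D)-stable: for all distributions λ0, λ1 on X, D(T(λ0), T(λ1)) ≤ c·D(λ0,λ1). If a mechanism A : X → D(Y) provides (ε,D,δ)-extended distribution privacy with respect to all pairs of distributions, then the composite map λ ↦ A#(T(λ)) provides (c·ε, D, δ)-extended distribution privacy: for all distributions λ0, λ1 on X and all R ⊆ Y, A#(T(λ0))[R] ≤ e^{c·ε·D(λ0,λ1)}·A#(T(λ1))[R] + δ. -/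

import Mathlib

/-!
Common definitions: probability distributions on finite sets, mechanisms,
liftings, couplings, lifted relations, Wasserstein metric, privacy notions.
-/

/-- `l` is a probability distribution on the finite set `X`. -/
def IsDist {X : Type*} [Fintype X] (l : X → ℝ) : Prop :=
  (∀ x, 0 ≤ l x) ∧ ∑ x, l x = 1

/-- `A` is a mechanism from `X` to `Y`: each `A x` is a distribution on `Y`. -/
def IsMech {X Y : Type*} [Fintype X] [Fintype Y] (A : X → Y → ℝ) : Prop :=
  ∀ x, IsDist (A x)

/-- Probability that a distribution `μ` assigns to a set `R`. -/
def probOf {Y : Type*} (μ : Y → ℝ) (R : Finset Y) : ℝ := ∑ y ∈ R, μ y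

/-- The lifting `A#` of a mechanism `A`, applied to an input distribution `l`. -/
def liftDist {X Y : Type*} [Fintype X] (A : X → Y → ℝ) (l : X → ℝ) : Y → ℝ :=
  fun y => ∑ x, l x * A x y

/-- `γ` is a coupling of `l0` and `l1`. -/
def IsCoupling {X : Type*} [Fintype X] (γ : X × X → ℝ) (l0 l1 : X → ℝ) : Prop :=
  IsDist γ ∧ (∀ x0, l0 x0 = ∑ x1, γ (x0, x1)) ∧ (∀ x1, l1 x1 = ∑ x0, γ (x0, x1))

/-- The lifted relation `Φ#` on distributions. -/
def liftRel {X : Type*} [Fintype X] (Φ : Finset (X × X)) (l0 l1 : X → ℝ) : Prop :=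
  IsDist l0 ∧ IsDist l1 ∧ ∃ γ, IsCoupling γ l0 l1 ∧ ∀ p, 0 < γ p → p ∈ Φ

/-- The largest move `max_{(x0,x1) ∈ supp γ} d x0 x1` of a coupling `γ`. -/
noncomputable def maxCost {X : Type*} (d : X → X → ℝ) (γ : X × X → ℝ) : ℝ :=
  sSup {r | ∃ p : X × X, 0 < γ p ∧ r = d p.1 p.2}

/-- The ∞-Wasserstein metric w.r.t. `d`. -/
noncomputable def Winf {X : Type*} [Fintype X] (d : X → X → ℝ) (l0 l1 : X → ℝ) : ℝ :=
  sInf {r | ∃ γ, IsCoupling γ l0 l1 ∧ maxCost d γ = r}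

/-- The relation `Φ#∞`: pairs of distributions admitting a coupling supported in `Φ`
that attains the ∞-Wasserstein metric. -/
def liftRelInf {X : Type*} [Fintype X] (d : X → X → ℝ) (Φ : Finset (X × X))
    (l0 l1 : X → ℝ) : Prop :=
  IsDist l0 ∧ IsDist l1 ∧
    ∃ γ, IsCoupling γ l0 l1 ∧ (∀ p, 0 < γ p → p ∈ Φ) ∧ maxCost d γ = Winf d l0 l1

/-- `d` is a metric on `X`. -/
structure IsMetric {X : Type*} (d : X → X → ℝ) : Prop where
  nonneg : ∀ x y, 0 ≤ d x y
  eq_zero_iff : ∀ x y, d x y = 0 ↔ x = y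
  symm : ∀ x y, d x y = d y x
  triangle : ∀ x y z, d x z ≤ d x y + d y z

/-- `(ε,δ)`-differential privacy of `A` w.r.t. the adjacency relation `Φ`. -/
def DP {X Y : Type*} (A : X → Y → ℝ) (Φ : Finset (X × X)) (ε δ : ℝ) : Prop :=
  ∀ p ∈ Φ, ∀ R : Finset Y, probOf (A p.1) R ≤ Real.exp ε * probOf (A p.2) R + δ

/-- `(ε,d,δ)`-extended differential privacy of `A` w.r.t. `Φ`. -/
def XDP {X Y : Type*} (A : X → Y → ℝ) (Φ : Finset (X × X)) (ε : ℝ)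
    (d : X → X → ℝ) (δ : ℝ) : Prop :=
  ∀ p ∈ Φ, ∀ R : Finset Y,
    probOf (A p.1) R ≤ Real.exp (ε * d p.1 p.2) * probOf (A p.2) R + δ

/-- `(ε,δ)`-distribution privacy of `M` w.r.t. a relation `Ψ` on distributions. -/
def DistP {X Z : Type*} [Fintype X] (M : X → Z → ℝ)
    (Ψ : (X → ℝ) → (X → ℝ) → Prop) (ε δ : ℝ) : Prop :=
  ∀ l0 l1, Ψ l0 l1 → ∀ R : Finset Z,
    probOf (liftDist M l0) R ≤ Real.exp ε * probOf (liftDist M l1) R + δ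

/-- `(ε,D,δ)`-extended distribution privacy of `M` w.r.t. `Ψ`. -/
def XDistP {X Z : Type*} [Fintype X] (M : X → Z → ℝ)
    (Ψ : (X → ℝ) → (X → ℝ) → Prop) (ε : ℝ) (D : (X → ℝ) → (X → ℝ) → ℝ) (δ : ℝ) : Prop :=
  ∀ l0 l1, Ψ l0 l1 → ∀ R : Finset Z,
    probOf (liftDist M l0) R ≤ Real.exp (ε * D l0 l1) * probOf (liftDist M l1) R + δ

/-- `(ε,δ)`-probabilistic distribution privacy of `M` w.r.t. `Ψ`. -/
def pDistP {X Z : Type*} [Fintype X] [DecidableEq Z] (M : X → Z → ℝ)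
    (Ψ : (X → ℝ) → (X → ℝ) → Prop) (ε δ : ℝ) : Prop :=
  ∀ l0 l1, Ψ l0 l1 → ∃ R' : Finset Z,
    probOf (liftDist M l0) R' ≤ δ ∧ probOf (liftDist M l1) R' ≤ δ ∧
    ∀ R : Finset Z,
      probOf (liftDist M l0) (R \ R') ≤ Real.exp ε * probOf (liftDist M l1) (R \ R') ∧
      probOf (liftDist M l1) (R \ R') ≤ Real.exp ε * probOf (liftDist M l0) (R \ R')

/-- The uniform distribution on a finite set `Y`. -/
noncomputable def uniformDist (Y : Type*) [Fintype Y] : Y → ℝ :=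
  fun _ => (Fintype.card Y : ℝ)⁻¹

/-- The `(k,ν,A)`-tupling mechanism from `X` to `Y^(k+1)`. -/
noncomputable def tupling {X Y : Type*} [Fintype Y] (k : ℕ) (ν : Y → ℝ) (A : X → Y → ℝ) :
    X → (Fin (k + 1) → Y) → ℝ :=
  fun x yb => ((k : ℝ) + 1)⁻¹ *
    ∑ i : Fin (k + 1), A x (yb i) * ∏ j ∈ Finset.univ.erase i, ν (yb j)

/-- The set of distributions `Λ_{β,η,A}`. -/
def Lam {X Y : Type*} [Fintype X] [Fintype Y] (β η : ℝ) (A : X → Y → ℝ)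
    (l : X → ℝ) : Prop :=
  IsDist l ∧ (1 - η) * (Fintype.card Y : ℝ) ≤ ({y : Y | liftDist A l y ≤ β}.ncard : ℝ)

/-- The product distribution `λ0 × λ1` on `X × X`. -/
def prodDist {X : Type*} (l0 l1 : X → ℝ) : X × X → ℝ := fun p => l0 p.1 * l1 p.2

/-- Sequential composition with shared input. -/
def compShared {X Y0 Y1 : Type*} [Fintype Y0] (A0 : X → Y0 → ℝ)
    (A1 : Y0 → X → Y1 → ℝ) : X → Y1 → ℝ :=
  fun x y1 => ∑ y0, A0 x y0 * A1 y0 x y1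

/-- Sequential composition with independent inputs. -/
def compInd {X Y0 Y1 : Type*} [Fintype Y0] (A0 : X → Y0 → ℝ)
    (A1 : Y0 → X → Y1 → ℝ) : X × X → Y1 → ℝ :=
  fun p y1 => ∑ y0, A0 p.1 y0 * A1 y0 p.2 y1

/-- Post-processing composition. -/
def postProc {X Y Z : Type*} [Fintype Y] (A0 : X → Y → ℝ) (A1 : Y → Z → ℝ) :
    X → Z → ℝ :=
  fun x z => ∑ y, A0 x y * A1 y z

/-- The point distribution at `x`. -/
def pointDist {X : Type*} [DecidableEq X] (x : X) : X → ℝ :=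
  fun x' => if x' = x then 1 else 0

/-- pre-processing by a (c,D)-stable transformation. -/
theorem preProc_stable_xdistP {X Y : Type*} [Fintype X] [Fintype Y]
    [Nonempty X] [Nonempty Y]
    (c ε δ : ℝ) (hc : 0 ≤ c) (hε : 0 ≤ ε) (hδ0 : 0 ≤ δ) (hδ1 : δ ≤ 1)
    (D : (X → ℝ) → (X → ℝ) → ℝ) (hD : ∀ l l', 0 ≤ D l l')
    (T : (X → ℝ) → (X → ℝ))
    (hT : ∀ l, IsDist l → IsDist (T l))
    (hstable : ∀ l0 l1, IsDist l0 → IsDist l1 → D (T l0) (T l1) ≤ c * D l0 l1)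
    (A : X → Y → ℝ) (hA : IsMech A)
    (h : XDistP A (fun l l' => IsDist l ∧ IsDist l') ε D δ) :
    ∀ l0 l1, IsDist l0 → IsDist l1 → ∀ R : Finset Y,
      probOf (liftDist A (T l0)) R ≤
        Real.exp (c * ε * D l0 l1) * probOf (liftDist A (T l1)) R + δ := by
  intro l0 l1 h0 h1 R
  have hT0 := hT l0 h0
  have hT1 := hT l1 h1
  have key := h (T l0) (T l1) ⟨hT0, hT1⟩ R
  have hpos : 0 ≤ probOf (liftDist A (T l1)) R := by
    apply Finset.sum_nonneg
    intro y _
    apply Finset.sum_nonneg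
    intro x _
    exact mul_nonneg (hT1.1 x) ((hA x).1 y)
  have hle : ε * D (T l0) (T l1) ≤ c * ε * D l0 l1 := by
    calc ε * D (T l0) (T l1) ≤ ε * (c * D l0 l1) :=
          mul_le_mul_of_nonneg_left (hstable l0 l1 h0 h1) hε
      _ = c * ε * D l0 l1 := by ring
  calc probOf (liftDist A (T l0)) R
      ≤ Real.exp (ε * D (T l0) (T l1)) * probOf (liftDist A (T l1)) R + δ := key
    _ ≤ Real.exp (c * ε * D l0 l1) * probOf (liftDist A (T l1)) R + δ :=
        add_le_add_left (mul_le_mul_of_nonneg_right (Real.exp_le_exp.mpr hle) hpos) δ
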